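/- If the empirical frequency ν((X₁,…,Xₙ), Bᵢ) converges to ρ_X(Bᵢ) for every i (and similarly ν((Y₁,…,Y_m), Bᵢ) → ρ_Y(Bᵢ)), then d̂(X,Y) → d(ρ_X,ρ_Y) as n,m → ∞. In particular, for samples X and Y generated independently by stationary ergodic processes ρ_X and ρ_Y, d̂((X₁,…,X_k),(Y₁,…,Y_m)) → d(ρ_X,ρ_Y) almost surely as k,m → ∞. -/

import Mathlib

open MeasureTheory Filter Topology Set

section Helpers

lemma limsup_eq_of_tendsto_sub {u v : ℕ → ℝ} {C : ℝ}
    (hu : ∀ n, |u n| ≤ C) (hv : ∀ n, |v n| ≤ C)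
    (h : Tendsto (fun n => u n - v n) atTop (𝓝 0)) :
    limsup u atTop = limsup v atTop := by
  have key : ∀ (a b : ℕ → ℝ), (∀ n, |a n| ≤ C) → (∀ n, |b n| ≤ C) →
      Tendsto (fun n => a n - b n) atTop (𝓝 0) → limsup a atTop ≤ limsup b atTop := by
    intro a b ha hb hab
    have hb1 : IsBoundedUnder (· ≥ ·) atTop b :=
      isBoundedUnder_of ⟨-C, fun n => neg_le_of_abs_le (hb n)⟩
    have hb2 : IsBoundedUnder (· ≤ ·) atTop b :=
      isBoundedUnder_of ⟨C, fun n => le_of_abs_le (hb n)⟩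
    have hw4 : IsBoundedUnder (· ≤ ·) atTop (fun n => a n - b n) :=
      hab.isBoundedUnder_le
    have hw3 : IsCoboundedUnder (· ≤ ·) atTop (fun n => a n - b n) :=
      hab.isBoundedUnder_ge.isCoboundedUnder_le
    have h1 : limsup (b + fun n => a n - b n) atTop ≤
        limsup b atTop + limsup (fun n => a n - b n) atTop :=
      limsup_add_le hb1 hb2 hw3 hw4
    have h2 : (b + fun n => a n - b n) = a := by funext n; simp
    rw [h2, hab.limsup_eq, add_zero] at h1
    exact h1
  refine le_antisymm (key u v hu hv h) (key v u hv hu ?_)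
  simpa using h.neg

lemma limsup_neg_eq {u : ℕ → ℝ} {C : ℝ} (hu : ∀ n, |u n| ≤ C) :
    limsup (fun n => -u n) atTop = -liminf u atTop := by
  have hb1 : IsBoundedUnder (· ≥ ·) atTop u :=
    isBoundedUnder_of ⟨-C, fun n => neg_le_of_abs_le (hu n)⟩
  have hb2 : IsCoboundedUnder (· ≥ ·) atTop u :=
    (isBoundedUnder_of ⟨C, fun n => le_of_abs_le (hu n)⟩).isCoboundedUnder_ge
  have := Antitone.map_liminf_of_continuousAt (F := (atTop : Filter ℕ))
    (f := fun x : ℝ => -x) (fun x y h => neg_le_neg h) u (by fun_prop) hb2 hb1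
  rw [show (fun n => -u n) = (fun x : ℝ => -x) ∘ u from rfl, ← this]

end Helpers

section Birkhoff

variable {α : Type*} [MeasurableSpace α] {μ : Measure α} {f : α → α} {g : α → ℝ} {C : ℝ}

/-- Running maximum of Birkhoff sums, `Φ n x = max_{k ≤ n} S_k x` (with `S_0 = 0`). -/
noncomputable def phiMax (f : α → α) (g : α → ℝ) : ℕ → α → ℝ
  | 0 => fun _ => 0
  | (n+1) => fun x => max (phiMax f g n x) (birkhoffSum f g (n+1) x)

lemma measurable_birkhoffSum (hf : Measurable f) (hg : Measurable g) (n : ℕ) :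
    Measurable (birkhoffSum f g n) := by
  apply Finset.measurable_sum
  intro k _
  exact hg.comp (hf.iterate k)

lemma abs_birkhoffSum_le (hC : ∀ x, |g x| ≤ C) (n : ℕ) (x : α) :
    |birkhoffSum f g n x| ≤ n * C := by
  calc |birkhoffSum f g n x| ≤ ∑ k ∈ Finset.range n, |g (f^[k] x)| :=
        Finset.abs_sum_le_sum_abs _ _
    _ ≤ ∑ _k ∈ Finset.range n, C := Finset.sum_le_sum fun k _ => hC _
    _ = n * C := by simp [mul_comm]

lemma phiMax_nonneg (n : ℕ) (x : α) : 0 ≤ phiMax f g n x := by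
  induction n with
  | zero => simp [phiMax]
  | succ n ih => exact le_trans ih (le_max_left _ _)

lemma measurable_phiMax (hf : Measurable f) (hg : Measurable g) (n : ℕ) :
    Measurable (phiMax f g n) := by
  induction n with
  | zero => simpa [phiMax] using measurable_const
  | succ n ih => exact Measurable.max ih (measurable_birkhoffSum hf hg (n+1))

lemma phiMax_mono (n : ℕ) (x : α) : phiMax f g n x ≤ phiMax f g (n+1) x := le_max_left _ _

lemma birkhoffSum_le_phiMax {k n : ℕ} (h : k ≤ n) (x : α) :
    birkhoffSum f g k x ≤ phiMax f g n x := by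
  induction n with
  | zero =>
    interval_cases k
    simp [phiMax, birkhoffSum]
  | succ n ih =>
    rcases Nat.lt_or_ge k (n+1) with hk | hk
    · exact le_trans (ih (Nat.lt_succ_iff.mp hk)) (phiMax_mono n x)
    · have : k = n + 1 := le_antisymm h hk
      subst this
      exact le_max_right _ _

lemma phiMax_succ_eq (n : ℕ) (x : α) :
    phiMax f g (n+1) x = max 0 (g x + phiMax f g n (f x)) := by
  induction n generalizing x with
  | zero =>
    simp [phiMax, birkhoffSum_one, max_comm]
  | succ n ih =>
    have : phiMax f g (n+2) x = max (phiMax f g (n+1) x) (birkhoffSum f g (n+2) x) := rfl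
    rw [this, ih x, birkhoffSum_succ' f g (n+1) x]
    have : phiMax f g (n+1) (f x) = max (phiMax f g n (f x)) (birkhoffSum f g (n+1) (f x)) := rfl
    rw [this, max_assoc]
    congr 1
    exact max_add_add_left _ _ _

lemma abs_phiMax_le (hC : ∀ x, |g x| ≤ C) (n : ℕ) (x : α) : |phiMax f g n x| ≤ n * C := by
  rw [abs_of_nonneg (phiMax_nonneg n x)]
  induction n with
  | zero => simp [phiMax]
  | succ n ih =>
    have h1 : birkhoffSum f g (n+1) x ≤ ((n:ℝ)+1) * C := by
      have := le_of_abs_le (abs_birkhoffSum_le (f := f) hC (n+1) x)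
      push_cast at this; linarith
    have hC0 : (0:ℝ) ≤ C := le_trans (abs_nonneg _) (hC x)
    show max (phiMax f g n x) (birkhoffSum f g (n+1) x) ≤ _
    push_cast
    refine max_le ?_ h1
    nlinarith

lemma integrable_of_bddabs [IsFiniteMeasure μ] {h : α → ℝ} {D : ℝ} (hm : Measurable h)
    (hD : ∀ x, |h x| ≤ D) : Integrable h μ :=
  (integrable_const D).mono' hm.aestronglyMeasurable
    (ae_of_all _ fun x => by simpa [Real.norm_eq_abs] using hD x)

/-- The maximal ergodic lemma (Garsia's proof). -/
lemma maximal_ergodic [IsProbabilityMeasure μ] (hf : MeasurePreserving f μ μ)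
    (hg : Measurable g) (hC : ∀ x, |g x| ≤ C) :
    0 ≤ ∫ x in {x | ∃ n, 0 < phiMax f g (n+1) x}, g x ∂μ := by
  have hgi : Integrable g μ := integrable_of_bddabs hg hC
  set A : ℕ → Set α := fun n => {x | 0 < phiMax f g (n+1) x} with hA
  have hAm : ∀ n, MeasurableSet (A n) :=
    fun n => measurableSet_lt measurable_const (measurable_phiMax hf.measurable hg (n+1))
  have hphii : ∀ n, Integrable (phiMax f g n) μ :=
    fun n => integrable_of_bddabs (measurable_phiMax hf.measurable hg n) (abs_phiMax_le hC n)
  have hphif : ∀ n, Integrable (fun x => phiMax f g n (f x)) μ :=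
    fun n => integrable_of_bddabs ((measurable_phiMax hf.measurable hg n).comp hf.measurable)
      (fun x => abs_phiMax_le hC n (f x))
  have hcomp : ∀ n, ∫ x, phiMax f g n (f x) ∂μ = ∫ x, phiMax f g n x ∂μ := by
    intro n
    rw [← integral_map hf.measurable.aemeasurable
      (by rw [hf.map_eq]; exact (measurable_phiMax hf.measurable hg n).aestronglyMeasurable),
      hf.map_eq]
  -- step: each finite-level inequality
  have step : ∀ n, 0 ≤ ∫ x in A n, g x ∂μ := by
    intro n
    have key : ∀ x ∈ A n, phiMax f g (n+1) x - phiMax f g (n+1) (f x) ≤ g x := by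
      intro x hx
      have h1 : phiMax f g (n+1) x = g x + phiMax f g n (f x) := by
        have h2 := phiMax_succ_eq (f := f) (g := g) n x
        have hx' : 0 < phiMax f g (n+1) x := hx
        rcases max_cases 0 (g x + phiMax f g n (f x)) with ⟨h3, _⟩ | ⟨h3, _⟩
        · exfalso; rw [h2, h3] at hx'; exact lt_irrefl _ hx'
        · rw [h2, h3]
      have h4 : phiMax f g n (f x) ≤ phiMax f g (n+1) (f x) := phiMax_mono n (f x)
      linarith
    have hsub : Integrable (fun x => phiMax f g (n+1) x - phiMax f g (n+1) (f x)) μ :=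
      (hphii (n+1)).sub (hphif (n+1))
    have h5 : ∫ x in A n, (phiMax f g (n+1) x - phiMax f g (n+1) (f x)) ∂μ
        ≤ ∫ x in A n, g x ∂μ :=
      setIntegral_mono_on hsub.integrableOn hgi.integrableOn (hAm n) key
    refine le_trans ?_ h5
    rw [integral_sub ((hphii (n+1)).integrableOn) ((hphif (n+1)).integrableOn)]
    have h6 : ∫ x in A n, phiMax f g (n+1) x ∂μ = ∫ x, phiMax f g (n+1) x ∂μ := by
      rw [← integral_add_compl (hAm n) (hphii (n+1))]
      have : ∫ x in (A n)ᶜ, phiMax f g (n+1) x ∂μ = 0 := by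
        apply setIntegral_eq_zero_of_forall_eq_zero
        intro x hx
        have := phiMax_nonneg (f := f) (g := g) (n+1) x
        simp only [hA, mem_compl_iff, mem_setOf_eq, not_lt] at hx
        linarith
      rw [this, add_zero]
    have h7 : ∫ x in A n, phiMax f g (n+1) (f x) ∂μ ≤ ∫ x, phiMax f g (n+1) (f x) ∂μ :=
      setIntegral_le_integral (hphif (n+1)) (ae_of_all _ fun x => phiMax_nonneg (n+1) (f x))
    rw [h6]
    have h8 := hcomp (n+1)
    linarith
  -- pass to the limit over the increasing union
  have hAmono : ∀ n m, n ≤ m → A n ⊆ A m := by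
    intro n m hnm x hx
    simp only [hA, mem_setOf_eq] at hx ⊢
    calc (0:ℝ) < phiMax f g (n+1) x := hx
      _ ≤ phiMax f g (m+1) x := by
        clear hx
        induction m with
        | zero => interval_cases n; exact le_refl _
        | succ m ih =>
          rcases Nat.lt_or_ge n (m+1) with h | h
          · exact le_trans (ih (Nat.lt_succ_iff.mp h)) (phiMax_mono _ _)
          · have : n = m + 1 := le_antisymm hnm h
            subst this; exact le_refl _
  -- dominated convergence along the increasing union
  set U : Set α := ⋃ n, A n with hU
  have hUm : MeasurableSet U := MeasurableSet.iUnion hAm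
  have hUeq : {x | ∃ n, 0 < phiMax f g (n+1) x} = U := by
    ext x; simp [hU, hA]
  rw [hUeq, ← integral_indicator hUm]
  have htend : Tendsto (fun n => ∫ x, (A n).indicator g x ∂μ) atTop
      (𝓝 (∫ x, U.indicator g x ∂μ)) := by
    apply tendsto_integral_of_dominated_convergence (fun _ => C)
    · exact fun n => (hg.indicator (hAm n)).aestronglyMeasurable
    · exact integrable_const C
    · intro n
      refine ae_of_all _ fun x => ?_
      rw [Real.norm_eq_abs]
      refine le_trans ?_ (hC x)
      rcases Set.indicator_eq_zero_or_self (A n) g x with h | h <;> rw [h] <;> simp [abs_nonneg]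
    · refine ae_of_all _ fun x => ?_
      by_cases hx : x ∈ U
      · obtain ⟨n, hn⟩ := mem_iUnion.mp hx
        have hev : ∀ m, n ≤ m → (A m).indicator g x = U.indicator g x := by
          intro m hm
          rw [indicator_of_mem (hAmono n m hm hn), indicator_of_mem hx]
        exact tendsto_atTop_of_eventually_const hev
      · have hx' : ∀ n, x ∉ A n := fun n hn => hx (mem_iUnion.mpr ⟨n, hn⟩)
        have : ∀ m, (0:ℕ) ≤ m → (A m).indicator g x = U.indicator g x := by
          intro m _
          rw [indicator_of_notMem (hx' m), indicator_of_notMem hx]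
        exact tendsto_atTop_of_eventually_const this
  refine ge_of_tendsto htend (Eventually.of_forall fun n => ?_)
  rw [integral_indicator (hAm n)]
  exact step n

lemma abs_birkhoffAverage_le (hC : ∀ x, |g x| ≤ C) (n : ℕ) (x : α) :
    |birkhoffAverage ℝ f g n x| ≤ C := by
  have hC0 : (0:ℝ) ≤ C := le_trans (abs_nonneg _) (hC x)
  rcases Nat.eq_zero_or_pos n with rfl | hn
  · simp [birkhoffAverage, hC0]
  · have h1 : |birkhoffSum f g n x| ≤ n * C := abs_birkhoffSum_le hC n x
    have h2 : (0:ℝ) < n := by exact_mod_cast hn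
    have : |birkhoffAverage ℝ f g n x| = ((n:ℝ))⁻¹ * |birkhoffSum f g n x| := by
      rw [birkhoffAverage, smul_eq_mul, abs_mul, abs_inv, Nat.abs_cast]
    rw [this]
    calc ((n:ℝ))⁻¹ * |birkhoffSum f g n x| ≤ ((n:ℝ))⁻¹ * ((n:ℝ) * C) :=
          mul_le_mul_of_nonneg_left h1 (inv_nonneg.mpr h2.le)
      _ = C := by field_simp

lemma birkhoffAverage_comp_sub_tendsto (hC : ∀ x, |g x| ≤ C) (x : α) :
    Tendsto (fun n => birkhoffAverage ℝ f g n (f x) - birkhoffAverage ℝ f g n x)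
      atTop (𝓝 0) := by
  have hC0 : (0:ℝ) ≤ C := le_trans (abs_nonneg _) (hC x)
  apply squeeze_zero_norm (a := fun n : ℕ => 2 * C * (n:ℝ)⁻¹)
  · intro n
    rcases Nat.eq_zero_or_pos n with rfl | hn
    · simp [birkhoffAverage]
    · have h2 : (0:ℝ) < n := by exact_mod_cast hn
      have hS : birkhoffSum f g n (f x) - birkhoffSum f g n x = g (f^[n] x) - g x := by
        have e1 : birkhoffSum f g (n+1) x = g x + birkhoffSum f g n (f x) :=
          birkhoffSum_succ' f g n x
        have e2 : birkhoffSum f g (n+1) x = birkhoffSum f g n x + g (f^[n] x) :=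
          birkhoffSum_succ f g n x
        linarith
      have : birkhoffAverage ℝ f g n (f x) - birkhoffAverage ℝ f g n x
          = ((n:ℝ))⁻¹ * (g (f^[n] x) - g x) := by
        rw [birkhoffAverage, birkhoffAverage, smul_eq_mul, smul_eq_mul, ← mul_sub, hS]
      rw [Real.norm_eq_abs, this, abs_mul, abs_inv, Nat.abs_cast, mul_comm]
      apply mul_le_mul_of_nonneg_right _ (inv_nonneg.mpr h2.le)
      calc |g (f^[n] x) - g x| ≤ |g (f^[n] x)| + |g x| := abs_sub _ _
        _ ≤ 2 * C := by have := hC (f^[n] x); have := hC x; linarith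
  · have : Tendsto (fun n : ℕ => (n:ℝ)⁻¹) atTop (𝓝 0) :=
      tendsto_inv_atTop_nhds_zero_nat
    simpa using this.const_mul (2 * C)

lemma birkhoffSum_sub_const (a : ℝ) (n : ℕ) (x : α) :
    birkhoffSum f (fun y => g y - a) n x = birkhoffSum f g n x - n * a := by
  simp [birkhoffSum, Finset.sum_sub_distrib, mul_comm]

lemma birkhoff_limsup_le [IsProbabilityMeasure μ] (herg : Ergodic f μ)
    (hg : Measurable g) (hC : ∀ x, |g x| ≤ C) :
    ∀ᵐ x ∂μ, limsup (fun n => birkhoffAverage ℝ f g n x) atTop ≤ ∫ x, g x ∂μ := by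
  have hgi : Integrable g μ := integrable_of_bddabs hg hC
  set u : ℕ → α → ℝ := fun n x => birkhoffAverage ℝ f g n x with hu
  set L : α → ℝ := fun x => limsup (fun n => u n x) atTop with hL
  have hLf : ∀ x, L (f x) = L x := fun x =>
    limsup_eq_of_tendsto_sub (fun n => abs_birkhoffAverage_le hC n (f x))
      (fun n => abs_birkhoffAverage_le hC n x) (birkhoffAverage_comp_sub_tendsto hC x)
  have hubdd : ∀ x, IsBoundedUnder (· ≤ ·) atTop (fun n => u n x) := fun x =>
    isBoundedUnder_of ⟨C, fun n => le_of_abs_le (abs_birkhoffAverage_le hC n x)⟩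
  have hucob : ∀ x, IsCoboundedUnder (· ≤ ·) atTop (fun n => u n x) := by
    intro x
    have hb : IsBoundedUnder (· ≥ ·) atTop (fun n => u n x) :=
      isBoundedUnder_of ⟨-C, fun n => neg_le_of_abs_le (abs_birkhoffAverage_le hC n x)⟩
    exact hb.isCoboundedUnder_le
  have hmeasu : ∀ n, Measurable (u n) := fun n =>
    (measurable_birkhoffSum herg.measurable hg n).const_smul (((n:ℝ))⁻¹)
  have hE : ∀ a : ℝ, MeasurableSet {x | a < L x} := by
    intro a
    have heq : {x | a < L x} =
        ⋃ (q : ℚ) (_ : a < (q:ℝ)), ⋂ N, ⋃ n, ⋃ (_ : N ≤ n), {x | (q:ℝ) < u n x} := by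
      ext x
      simp only [mem_setOf_eq, mem_iUnion, mem_iInter, exists_prop]
      constructor
      · intro hx
        obtain ⟨q, hq1, hq2⟩ := exists_rat_btwn hx
        refine ⟨q, hq1, fun N => ?_⟩
        obtain ⟨n, hn1, hn2⟩ := frequently_atTop.mp (frequently_lt_of_lt_limsup (hucob x) hq2) N
        exact ⟨n, hn1, hn2⟩
      · rintro ⟨q, hq, hfreq⟩
        have hf2 : ∃ᶠ n in atTop, (q:ℝ) ≤ u n x := by
          rw [frequently_atTop]
          intro N; obtain ⟨n, h1, h2⟩ := hfreq N; exact ⟨n, h1, h2.le⟩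
        exact lt_of_lt_of_le hq (le_limsup_of_frequently_le hf2 (hubdd x))
    rw [heq]
    refine MeasurableSet.iUnion fun q => MeasurableSet.iUnion fun _ =>
      MeasurableSet.iInter fun N => MeasurableSet.iUnion fun n => MeasurableSet.iUnion fun _ =>
      measurableSet_lt measurable_const (hmeasu n)
  have hkey : ∀ a : ℝ, 0 < μ {x | a < L x} → a ≤ ∫ x, g x ∂μ := by
    intro a hpos
    have hinv : f ⁻¹' {x | a < L x} = {x | a < L x} := by
      ext x; simp only [mem_preimage, mem_setOf_eq, hLf x]
    rcases herg.ae_empty_or_univ (hE a) hinv with hnull | hfull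
    · exfalso
      have h0 : μ {x | a < L x} = 0 := by rw [measure_congr hnull]; simp
      rw [h0] at hpos; exact lt_irrefl _ hpos
    · set h : α → ℝ := fun x => g x - a with hh
      have hhm : Measurable h := hg.sub measurable_const
      have hhC : ∀ x, |h x| ≤ C + |a| := fun x => by
        have h1 := hC x
        calc |g x - a| ≤ |g x| + |a| := abs_sub _ _
          _ ≤ C + |a| := by linarith
      have hsubset : {x | a < L x} ⊆ {x | ∃ n, 0 < phiMax f h (n+1) x} := by
        intro x hx
        obtain ⟨n, hn1, hn2⟩ :=
          frequently_atTop.mp (frequently_lt_of_lt_limsup (hucob x) hx) 1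
        obtain ⟨m, rfl⟩ : ∃ m, n = m + 1 := ⟨n - 1, (Nat.succ_pred_eq_of_pos hn1).symm⟩
        refine ⟨m, ?_⟩
        have hp : (0:ℝ) < ((m:ℝ)+1) := by positivity
        have hn2' : a < ((m:ℝ)+1)⁻¹ * birkhoffSum f g (m+1) x := by
          have e : u (m+1) x = ((m:ℝ)+1)⁻¹ * birkhoffSum f g (m+1) x := by
            show (((m+1 : ℕ) : ℝ))⁻¹ • birkhoffSum f g (m+1) x = _
            rw [smul_eq_mul]; push_cast; ring_nf
          rw [← e]; exact hn2
        have h3 : ((m:ℝ)+1) * a < ((m:ℝ)+1) * (((m:ℝ)+1)⁻¹ * birkhoffSum f g (m+1) x) :=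
          mul_lt_mul_of_pos_left hn2' hp
        rw [← mul_assoc, mul_inv_cancel₀ (ne_of_gt hp), one_mul] at h3
        have hS : birkhoffSum f h (m+1) x = birkhoffSum f g (m+1) x - ((m:ℝ)+1) * a := by
          rw [hh, birkhoffSum_sub_const]; push_cast; ring
        have h4 : 0 < birkhoffSum f h (m+1) x := by rw [hS]; linarith
        calc (0:ℝ) < birkhoffSum f h (m+1) x := h4
          _ ≤ phiMax f h (m+1) x := birkhoffSum_le_phiMax (le_refl (m+1)) x
      have hmax := maximal_ergodic herg.toMeasurePreserving hhm hhC
      have hcomplnull : μ {x | ∃ n, 0 < phiMax f h (n+1) x}ᶜ = 0 := by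
        apply measure_mono_null (compl_subset_compl.mpr hsubset)
        exact ae_eq_univ.mp hfull
      have hmem : ∀ᵐ x ∂μ, x ∈ {x | ∃ n, 0 < phiMax f h (n+1) x} := by
        exact mem_ae_iff.mpr hcomplnull
      rw [show (∫ x in {x | ∃ n, 0 < phiMax f h (n+1) x}, h x ∂μ) = ∫ x, h x ∂μ by
        rw [Measure.restrict_eq_self_of_ae_mem hmem]] at hmax
      have : ∫ x, h x ∂μ = (∫ x, g x ∂μ) - a := by
        rw [hh]
        rw [integral_sub hgi (integrable_const a), integral_const]
        simp
      rw [this] at hmax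
      linarith
  -- countable union of level sets
  have hnull : μ {x | (∫ x, g x ∂μ) < L x} = 0 := by
    have hsub2 : {x | (∫ x, g x ∂μ) < L x} ⊆
        ⋃ (q : ℚ) (_ : (∫ x, g x ∂μ) < (q:ℝ)), {x | (q:ℝ) < L x} := by
      intro x hx
      have hx' : (∫ x, g x ∂μ) < L x := hx
      obtain ⟨q, h1, h2⟩ := exists_rat_btwn hx'
      simp only [mem_iUnion, exists_prop]
      exact ⟨q, h1, h2⟩
    refine measure_mono_null hsub2 (measure_iUnion_null fun q => measure_iUnion_null fun hq => ?_)
    by_contra hne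
    have hpos : 0 < μ {x | (q:ℝ) < L x} := pos_iff_ne_zero.mpr hne
    exact absurd (hkey _ hpos) (not_le.mpr hq)
  rw [ae_iff]
  convert hnull using 2
  ext x
  simp [not_le]
  exact Iff.rfl

lemma birkhoffAverage_neg' (n : ℕ) (x : α) :
    birkhoffAverage ℝ f (fun y => -g y) n x = -birkhoffAverage ℝ f g n x := by
  simp [birkhoffAverage, birkhoffSum, Finset.sum_neg_distrib]

theorem birkhoff_ae_tendsto [IsProbabilityMeasure μ] (herg : Ergodic f μ)
    (hg : Measurable g) (hC : ∀ x, |g x| ≤ C) :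
    ∀ᵐ x ∂μ, Tendsto (fun n => birkhoffAverage ℝ f g n x) atTop (𝓝 (∫ x, g x ∂μ)) := by
  have h1 := birkhoff_limsup_le herg hg hC
  have h2 := birkhoff_limsup_le (g := fun y => -g y) (C := C) herg hg.neg
    (fun x => by simpa using hC x)
  filter_upwards [h1, h2] with x hx1 hx2
  have hbdd1 : IsBoundedUnder (· ≤ ·) atTop (fun n => birkhoffAverage ℝ f g n x) :=
    isBoundedUnder_of ⟨C, fun n => le_of_abs_le (abs_birkhoffAverage_le hC n x)⟩
  have hbdd2 : IsBoundedUnder (· ≥ ·) atTop (fun n => birkhoffAverage ℝ f g n x) :=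
    isBoundedUnder_of ⟨-C, fun n => neg_le_of_abs_le (abs_birkhoffAverage_le hC n x)⟩
  have hx2' : (∫ x, g x ∂μ) ≤ liminf (fun n => birkhoffAverage ℝ f g n x) atTop := by
    have e1 : (fun n => birkhoffAverage ℝ f (fun y => -g y) n x)
        = fun n => -birkhoffAverage ℝ f g n x := by
      funext n; exact birkhoffAverage_neg' n x
    rw [e1, limsup_neg_eq (fun n => abs_birkhoffAverage_le hC n x)] at hx2
    have e2 : ∫ x, -g x ∂μ = -∫ x, g x ∂μ := integral_neg g
    rw [e2] at hx2
    linarith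
  have hle : liminf (fun n => birkhoffAverage ℝ f g n x) atTop ≤
      limsup (fun n => birkhoffAverage ℝ f g n x) atTop :=
    liminf_le_limsup hbdd1 hbdd2
  have heq1 : liminf (fun n => birkhoffAverage ℝ f g n x) atTop = ∫ x, g x ∂μ :=
    le_antisymm (by linarith) hx2'
  have heq2 : limsup (fun n => birkhoffAverage ℝ f g n x) atTop = ∫ x, g x ∂μ :=
    le_antisymm hx1 (by linarith)
  exact tendsto_of_liminf_eq_limsup heq1 heq2 hbdd1 hbdd2

end Birkhoff



/-- Empirical sliding-window frequency of the (cylinder) set `S` of dimension `l`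
in the sample given by the first `n` values of `X`. -/
noncomputable def nu (n : ℕ) (X : ℕ → ℝ) (l : ℕ) (S : Set (ℕ → ℝ)) : ℝ :=
  if l ≤ n ∧ 1 ≤ l then
    (∑ i ∈ Finset.range (n - l + 1),
      S.indicator (fun _ => (1 : ℝ)) (fun j => X (i + j))) / (n - l + 1)
  else 0

/-- A finite-dimensional cylinder with rational endpoints. -/
structure Cylinder where
  dim : ℕ
  dimPos : 0 < dim
  a : Fin dim → ℚ
  b : Fin dim → ℚ

/-- The subset of `ℕ → ℝ` determined by a cylinder (it constrains the first `dim`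
coordinates to lie in the corresponding rational-endpoint intervals). -/
def Cylinder.set (C : Cylinder) : Set (ℕ → ℝ) :=
  {x | ∀ j : Fin C.dim, (C.a j : ℝ) ≤ x j.val ∧ x j.val ≤ (C.b j : ℝ)}

/-- Distributional distance between two process measures. -/
noncomputable def dd (w : ℕ → ℝ) (B : ℕ → Cylinder) (μ ν : Measure (ℕ → ℝ)) : ℝ :=
  ∑' i, w i * |(μ (B i).set).toReal - (ν (B i).set).toReal|

/-- Empirical distributional distance between two finite samples. -/
noncomputable def dhat (w : ℕ → ℝ) (B : ℕ → Cylinder)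
    (n : ℕ) (X : ℕ → ℝ) (m : ℕ) (Y : ℕ → ℝ) : ℝ :=
  ∑' i, w i * |nu n X (B i).dim (B i).set - nu m Y (B i).dim (B i).set|

/-- One-sample empirical distributional distance to a known process measure. -/
noncomputable def dhat1 (w : ℕ → ℝ) (B : ℕ → Cylinder)
    (n : ℕ) (X : ℕ → ℝ) (ρ : Measure (ℕ → ℝ)) : ℝ :=
  ∑' i, w i * |nu n X (B i).dim (B i).set - (ρ (B i).set).toReal|

/-- The left shift on `ℕ → ℝ`. -/
def shift : (ℕ → ℝ) → (ℕ → ℝ) := fun x n => x (n + 1)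

/-- Concatenation of a word of length `k` with another word. -/
def conc (k : ℕ) (x y : ℕ → ℝ) : ℕ → ℝ := fun i => if i < k then x i else y (i - k)


section Glue

lemma Cylinder.measurableSet (C : Cylinder) : MeasurableSet C.set := by
  have : C.set = ⋂ j : Fin C.dim, (fun x : ℕ → ℝ => x j.val) ⁻¹' (Set.Icc (C.a j : ℝ) (C.b j)) := by
    ext x
    simp [Cylinder.set, Set.mem_iInter, Set.mem_Icc]
  rw [this]
  exact MeasurableSet.iInter fun j =>
    (measurable_pi_apply j.val) measurableSet_Icc

lemma measurable_shift : Measurable shift :=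
  measurable_pi_lambda _ fun n => measurable_pi_apply (n + 1)

lemma shift_iterate (i : ℕ) (x : ℕ → ℝ) : shift^[i] x = fun j => x (j + i) := by
  induction i generalizing x with
  | zero => simp
  | succ i ih =>
    rw [Function.iterate_succ_apply, ih (shift x)]
    funext j
    simp [shift, Nat.add_assoc]

lemma nu_eq_birkhoffAverage {n l : ℕ} (hl : 1 ≤ l) (hn : l ≤ n) (X : ℕ → ℝ) (S : Set (ℕ → ℝ)) :
    nu n X l S = birkhoffAverage ℝ shift (S.indicator (fun _ => (1:ℝ))) (n - l + 1) X := by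
  rw [nu, if_pos ⟨hn, hl⟩, birkhoffAverage, birkhoffSum, smul_eq_mul]
  rw [div_eq_inv_mul]
  have hcast : ((n:ℝ) - l + 1) = ((n - l + 1 : ℕ) : ℝ) := by
    push_cast [hn]; ring
  rw [hcast]
  congr 1
  apply Finset.sum_congr rfl
  intro i _
  congr 1
  rw [shift_iterate]
  funext j
  rw [Nat.add_comm]

lemma nu_nonneg (n l : ℕ) (X : ℕ → ℝ) (S : Set (ℕ → ℝ)) : 0 ≤ nu n X l S := by
  rw [nu]
  split_ifs with h
  · apply div_nonneg
    · apply Finset.sum_nonneg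
      intro i _
      exact Set.indicator_nonneg (fun _ _ => zero_le_one) _
    · have : (l:ℝ) ≤ n := Nat.cast_le.mpr h.1
      linarith
  · exact le_refl _

lemma nu_le_one (n l : ℕ) (X : ℕ → ℝ) (S : Set (ℕ → ℝ)) : nu n X l S ≤ 1 := by
  rw [nu]
  split_ifs with h
  · have hln : (l:ℝ) ≤ n := Nat.cast_le.mpr h.1
    rw [div_le_one (by linarith)]
    calc (∑ i ∈ Finset.range (n - l + 1), S.indicator (fun _ => (1:ℝ)) (fun j => X (i + j)))
        ≤ ∑ _i ∈ Finset.range (n - l + 1), 1 := by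
          apply Finset.sum_le_sum
          intro i _
          rcases Set.indicator_eq_zero_or_self S (fun _ => (1:ℝ)) (fun j => X (i + j)) with hh | hh
          · rw [hh]; exact zero_le_one
          · rw [hh]
      _ = ((n - l + 1 : ℕ) : ℝ) := by simp
      _ = (n:ℝ) - l + 1 := by push_cast [h.1]; ring
  · exact zero_le_one

end Glue

/-- If the empirical frequencies of each cylinder converge to the corresponding
probabilities, then the empirical distributional distance converges to the
distributional distance; in particular, for independent samples from stationary
ergodic processes this convergence holds almost surely. -/
theorem stmt5 (w : ℕ → ℝ) (hw : ∀ i, 0 < w i) (hsum : Summable w)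
    (B : ℕ → Cylinder) (μX μY : Measure (ℕ → ℝ))
    [IsProbabilityMeasure μX] [IsProbabilityMeasure μY] :
    (∀ X Y : ℕ → ℝ,
      (∀ i, Tendsto (fun n => nu n X (B i).dim (B i).set) atTop
          (𝓝 ((μX (B i).set).toReal))) →
      (∀ i, Tendsto (fun m => nu m Y (B i).dim (B i).set) atTop
          (𝓝 ((μY (B i).set).toReal))) →
      Tendsto (fun km : ℕ × ℕ => dhat w B km.1 X km.2 Y) (atTop ×ˢ atTop)
        (𝓝 (dd w B μX μY))) ∧
    (Ergodic shift μX → Ergodic shift μY →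
      ∀ᵐ z ∂ μX.prod μY,
        Tendsto (fun km : ℕ × ℕ => dhat w B km.1 z.1 km.2 z.2) (atTop ×ˢ atTop)
          (𝓝 (dd w B μX μY))) := by
  have part1 : ∀ X Y : ℕ → ℝ,
      (∀ i, Tendsto (fun n => nu n X (B i).dim (B i).set) atTop
          (𝓝 ((μX (B i).set).toReal))) →
      (∀ i, Tendsto (fun m => nu m Y (B i).dim (B i).set) atTop
          (𝓝 ((μY (B i).set).toReal))) →
      Tendsto (fun km : ℕ × ℕ => dhat w B km.1 X km.2 Y) (atTop ×ˢ atTop)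
        (𝓝 (dd w B μX μY)) := by
    intro X Y hX hY
    have key := tendsto_tsum_of_dominated_convergence
      (𝓕 := atTop ×ˢ atTop)
      (f := fun (km : ℕ × ℕ) (i : ℕ) =>
        w i * |nu km.1 X (B i).dim (B i).set - nu km.2 Y (B i).dim (B i).set|)
      (g := fun i => w i * |(μX (B i).set).toReal - (μY (B i).set).toReal|)
      (bound := fun i => w i * 2)
      (hsum.mul_right 2)
      (fun i => by
        have h1 : Tendsto (fun km : ℕ × ℕ => nu km.1 X (B i).dim (B i).set)
            (atTop ×ˢ atTop) (𝓝 ((μX (B i).set).toReal)) := (hX i).comp tendsto_fst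
        have h2 : Tendsto (fun km : ℕ × ℕ => nu km.2 Y (B i).dim (B i).set)
            (atTop ×ˢ atTop) (𝓝 ((μY (B i).set).toReal)) := (hY i).comp tendsto_snd
        exact tendsto_const_nhds.mul (h1.sub h2).abs)
      (Eventually.of_forall fun km i => by
        rw [Real.norm_eq_abs, abs_mul, abs_abs, abs_of_pos (hw i)]
        apply mul_le_mul_of_nonneg_left _ (hw i).le
        have a1 := nu_nonneg km.1 (B i).dim X (B i).set
        have a2 := nu_le_one km.1 (B i).dim X (B i).set
        have a3 := nu_nonneg km.2 (B i).dim Y (B i).set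
        have a4 := nu_le_one km.2 (B i).dim Y (B i).set
        rw [abs_le]
        constructor <;> nlinarith)
    exact key
  refine ⟨part1, ?_⟩
  intro hergX hergY
  have hone : ∀ (i : ℕ) (x : ℕ → ℝ), |(B i).set.indicator (fun _ => (1:ℝ)) x| ≤ 1 := by
    intro i x
    rcases Set.indicator_eq_zero_or_self (B i).set (fun _ => (1:ℝ)) x with h | h <;>
      rw [h] <;> simp
  have hmeas : ∀ i : ℕ, Measurable ((B i).set.indicator (fun _ => (1:ℝ))) := fun i =>
    measurable_const.indicator (Cylinder.measurableSet (B i))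
  have hae : ∀ (μ : Measure (ℕ → ℝ)) (_ : IsProbabilityMeasure μ) (_ : Ergodic shift μ),
      ∀ᵐ x ∂μ, ∀ i, Tendsto (fun n => nu n x (B i).dim (B i).set) atTop
        (𝓝 ((μ (B i).set).toReal)) := by
    intro μ hμ herg
    rw [ae_all_iff]
    intro i
    have hb := birkhoff_ae_tendsto herg (hmeas i) (hone i)
    have hint : ∫ x, (B i).set.indicator (fun _ => (1:ℝ)) x ∂μ = (μ (B i).set).toReal := by
      exact integral_indicator_one (Cylinder.measurableSet (B i)) (μ := μ)
    rw [hint] at hb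
    refine hb.mono fun x hx => ?_
    have hcomp : Tendsto (fun n : ℕ => n - (B i).dim + 1) atTop atTop :=
      (tendsto_add_atTop_nat 1).comp (tendsto_sub_atTop_nat (B i).dim)
    have h2 := hx.comp hcomp
    apply h2.congr'
    filter_upwards [eventually_ge_atTop (B i).dim] with n hn
    exact (nu_eq_birkhoffAverage (B i).dimPos hn x (B i).set).symm
  have hXae := hae μX inferInstance hergX
  have hYae := hae μY inferInstance hergY
  have h1 : ∀ᵐ z ∂(μX.prod μY), ∀ i, Tendsto (fun n => nu n z.1 (B i).dim (B i).set) atTop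
      (𝓝 ((μX (B i).set).toReal)) := by
    have hmap : (μX.prod μY).map Prod.fst = μX := by
      rw [Measure.map_fst_prod]; simp
    exact ae_of_ae_map (p := fun x : ℕ → ℝ => ∀ i,
        Tendsto (fun n => nu n x (B i).dim (B i).set) atTop (𝓝 ((μX (B i).set).toReal)))
      (measurable_fst.aemeasurable (μ := μX.prod μY)) (by rw [hmap]; exact hXae)
  have h2 : ∀ᵐ z ∂(μX.prod μY), ∀ i, Tendsto (fun m => nu m z.2 (B i).dim (B i).set) atTop
      (𝓝 ((μY (B i).set).toReal)) := by
    have hmap : (μX.prod μY).map Prod.snd = μY := by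
      rw [Measure.map_snd_prod]; simp
    exact ae_of_ae_map (p := fun y : ℕ → ℝ => ∀ i,
        Tendsto (fun m => nu m y (B i).dim (B i).set) atTop (𝓝 ((μY (B i).set).toReal)))
      (measurable_snd.aemeasurable (μ := μX.prod μY)) (by rw [hmap]; exact hYae)
  filter_upwards [h1, h2] with z hz1 hz2
  exact part1 z.1 z.2 hz1 hz2
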